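/- arXiv:0711.1960 — 3 statements merged into one kernel-verified Lean document; each statement's English description precedes it below -/
import Mathlib

section
/- Let t > 0, t_- < 0 with t + t_- < 0, μ_u ≤ 1, μ_s ≥ 1. Suppose U : ℝ^{d_u} → ℝ^{d_u} and S : ℝ^{d_s} → ℝ^{d_s} are linear maps with |Uξ| ≤ μ_u|ξ| for all ξ and |Sη| ≥ μ_s|η| for all η. Then there exists a constant C > 0, depending only on t, t_-, d_u, d_s, U, S, such that for all (ξ, η) ∈ ℝ^{d_u} × ℝ^{d_s}: (1 + |Uξ|² + |Sη|²)^{t/2}(1 + |Sη|²)^{t_- /2} ≤ 2^{max(t, -t_- /2)} max(μ_u^t, μ_s^{t+t_-}) (1 + |ξ|² + |η|²)^{t/2}(1 + |η|²)^{t_- /2} + C (1 + |η|²)^{t_- /2}. -/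
open Real
set_option maxHeartbeats 1000000

lemma key_ineq (t tm μu μs a b u s : ℝ)
    (ht : 0 < t) (htm : tm < 0) (hsum : t + tm < 0)
    (hμu : μu ≤ 1) (hμs : 1 ≤ μs)
    (hb : 0 ≤ b) (hu2 : u ^ 2 ≤ μu ^ 2 * a ^ 2) (hs2 : μs ^ 2 * b ^ 2 ≤ s ^ 2)
    (hμu0 : 1 + b ^ 2 ≤ μu ^ 2 * a ^ 2 → 0 ≤ μu) :
    (1 + u ^ 2 + s ^ 2) ^ (t / 2) * (1 + s ^ 2) ^ (tm / 2) ≤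
      (2 : ℝ) ^ (max t (-tm / 2)) * max (μu ^ t) (μs ^ (t + tm)) *
        ((1 + a ^ 2 + b ^ 2) ^ (t / 2) * (1 + b ^ 2) ^ (tm / 2)) +
      (3 ^ (t / 2) * 2 ^ (-tm / 2)) * (1 + b ^ 2) ^ (tm / 2) := by
  have hP : (0:ℝ) < 1 + b ^ 2 := by positivity
  have hQ : (0:ℝ) < 1 + μs ^ 2 * b ^ 2 := by positivity
  have hK : (0:ℝ) < 1 + s ^ 2 := by positivity
  have hPQ : 1 + b ^ 2 ≤ 1 + μs ^ 2 * b ^ 2 := by nlinarith [mul_nonneg (mul_nonneg (sub_nonneg.mpr hμs) (by linarith : (0:ℝ) ≤ μs + 1)) (sq_nonneg b)]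
  have hQK : 1 + μs ^ 2 * b ^ 2 ≤ 1 + s ^ 2 := by linarith
  have htm2 : (t + tm) / 2 ≤ 0 := by linarith
  -- step 1 : LHS ≤ g
  have step1 : (1 + u ^ 2 + s ^ 2) ^ (t / 2) * (1 + s ^ 2) ^ (tm / 2) ≤
      (1 + μu ^ 2 * a ^ 2 / (1 + μs ^ 2 * b ^ 2)) ^ (t / 2) *
        (1 + μs ^ 2 * b ^ 2) ^ ((t + tm) / 2) := by
    have e1 : (1 + u ^ 2 + s ^ 2) ^ (t / 2) * (1 + s ^ 2) ^ (tm / 2) =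
        (1 + u ^ 2 / (1 + s ^ 2)) ^ (t / 2) * (1 + s ^ 2) ^ ((t + tm) / 2) := by
      have h2 : 1 + u ^ 2 / (1 + s ^ 2) = (1 + u ^ 2 + s ^ 2) / (1 + s ^ 2) := by
        field_simp; ring
      rw [h2, Real.div_rpow (by positivity) hK.le, div_mul_eq_mul_div,
        mul_div_assoc, ← Real.rpow_sub hK,
        show (t + tm) / 2 - t / 2 = tm / 2 by ring]
    rw [e1]
    have h3 : 1 + u ^ 2 / (1 + s ^ 2) ≤ 1 + μu ^ 2 * a ^ 2 / (1 + μs ^ 2 * b ^ 2) := by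
      have h5 : u ^ 2 / (1 + s ^ 2) ≤ μu ^ 2 * a ^ 2 / (1 + μs ^ 2 * b ^ 2) := by
        rw [div_le_div_iff₀ hK hQ]
        nlinarith [sq_nonneg u, sq_nonneg (μu * a)]
      linarith
    have h4 : (1 + s ^ 2) ^ ((t + tm) / 2) ≤ (1 + μs ^ 2 * b ^ 2) ^ ((t + tm) / 2) :=
      Real.rpow_le_rpow_of_nonpos hQ hQK htm2
    exact mul_le_mul (Real.rpow_le_rpow (by positivity) h3 (by positivity)) h4
      (Real.rpow_nonneg hK.le _) (Real.rpow_nonneg (by positivity) _)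
  have hmaxpos : 0 < max (μu ^ t) (μs ^ (t + tm)) :=
    lt_of_lt_of_le (Real.rpow_pos_of_pos (by linarith) _) (le_max_right _ _)
  have h2max : (0:ℝ) < (2:ℝ) ^ (max t (-tm / 2)) := Real.rpow_pos_of_pos two_pos _
  have hCpos : (0:ℝ) < (3:ℝ) ^ (t / 2) * 2 ^ (-tm / 2) := by positivity
  -- RHS main term identity
  have emain : (1 + a ^ 2 + b ^ 2) ^ (t / 2) * (1 + b ^ 2) ^ (tm / 2) =
      (1 + a ^ 2 / (1 + b ^ 2)) ^ (t / 2) * (1 + b ^ 2) ^ ((t + tm) / 2) := by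
    have h2 : 1 + a ^ 2 / (1 + b ^ 2) = (1 + a ^ 2 + b ^ 2) / (1 + b ^ 2) := by
      field_simp; ring
    rw [h2, Real.div_rpow (by positivity) hP.le, div_mul_eq_mul_div,
      mul_div_assoc, ← Real.rpow_sub hP,
      show (t + tm) / 2 - t / 2 = tm / 2 by ring]
  refine le_trans step1 ?_
  have hmainnn : 0 ≤ (1 + a ^ 2 + b ^ 2) ^ (t / 2) * (1 + b ^ 2) ^ (tm / 2) := by
    positivity
  by_cases hcase1 : 1 + b ^ 2 ≤ μu ^ 2 * a ^ 2
  · -- case (i): main term with μu^t dominates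
    have hμ0 : 0 ≤ μu := hμu0 hcase1
    have A1 : μu ^ 2 * a ^ 2 / (1 + μs ^ 2 * b ^ 2) ≤ μu ^ 2 * a ^ 2 / (1 + b ^ 2) := by
      gcongr
    have A2 : 1 + μu ^ 2 * a ^ 2 / (1 + b ^ 2) ≤
        2 * μu ^ 2 * (1 + a ^ 2 + b ^ 2) / (1 + b ^ 2) := by
      rw [show (1:ℝ) + μu ^ 2 * a ^ 2 / (1 + b ^ 2) =
        ((1 + b ^ 2) + μu ^ 2 * a ^ 2) / (1 + b ^ 2) by field_simp]
      gcongr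
      nlinarith [sq_nonneg μu, sq_nonneg (μu * b), sq_nonneg (μu * a)]
    have B1 : (1 + μu ^ 2 * a ^ 2 / (1 + μs ^ 2 * b ^ 2)) ^ (t / 2) ≤
        (2 * μu ^ 2 * (1 + a ^ 2 + b ^ 2) / (1 + b ^ 2)) ^ (t / 2) :=
      Real.rpow_le_rpow (by positivity) (le_trans (by linarith) A2) (by positivity)
    have B2 : (1 + μs ^ 2 * b ^ 2) ^ ((t + tm) / 2) ≤ (1 + b ^ 2) ^ ((t + tm) / 2) :=
      Real.rpow_le_rpow_of_nonpos hP hPQ htm2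
    have expand : (2 * μu ^ 2 * (1 + a ^ 2 + b ^ 2) / (1 + b ^ 2)) ^ (t / 2) *
        (1 + b ^ 2) ^ ((t + tm) / 2) =
        2 ^ (t / 2) * μu ^ t * ((1 + a ^ 2 + b ^ 2) ^ (t / 2) * (1 + b ^ 2) ^ (tm / 2)) := by
      rw [Real.div_rpow (by positivity) hP.le, div_mul_eq_mul_div,
        Real.mul_rpow (by positivity) (by positivity),
        Real.mul_rpow (by norm_num) (by positivity)]
      have hμt : (μu ^ 2) ^ (t / 2) = μu ^ t := by
        rw [← Real.rpow_natCast μu 2, ← Real.rpow_mul hμ0,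
          show ((2:ℕ):ℝ) * (t / 2) = t by push_cast; ring]
      rw [hμt, mul_div_assoc, ← Real.rpow_sub hP,
        show (t + tm) / 2 - t / 2 = tm / 2 by ring]
      ring
    calc (1 + μu ^ 2 * a ^ 2 / (1 + μs ^ 2 * b ^ 2)) ^ (t / 2) *
          (1 + μs ^ 2 * b ^ 2) ^ ((t + tm) / 2)
        ≤ (2 * μu ^ 2 * (1 + a ^ 2 + b ^ 2) / (1 + b ^ 2)) ^ (t / 2) *
          (1 + b ^ 2) ^ ((t + tm) / 2) := by
          exact mul_le_mul B1 B2 (Real.rpow_nonneg (by positivity) _)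
            (Real.rpow_nonneg (by positivity) _)
      _ = 2 ^ (t / 2) * μu ^ t *
            ((1 + a ^ 2 + b ^ 2) ^ (t / 2) * (1 + b ^ 2) ^ (tm / 2)) := expand
      _ ≤ (2:ℝ) ^ (max t (-tm / 2)) * max (μu ^ t) (μs ^ (t + tm)) *
            ((1 + a ^ 2 + b ^ 2) ^ (t / 2) * (1 + b ^ 2) ^ (tm / 2)) := by
          apply mul_le_mul_of_nonneg_right _ hmainnn
          apply mul_le_mul _ (le_max_left _ _) (Real.rpow_nonneg hμ0 _) h2max.le
          exact Real.rpow_le_rpow_of_exponent_le one_le_two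
            (le_trans (by linarith) (le_max_left t (-tm / 2)))
      _ ≤ _ := le_add_of_nonneg_right (by positivity)
  · push_neg at hcase1
    have hfr1 : μu ^ 2 * a ^ 2 / (1 + μs ^ 2 * b ^ 2) ≤ 1 :=
      (div_le_one hQ).mpr (le_trans hcase1.le hPQ)
    rcases le_or_gt 1 b with hb1 | hb1
    · -- case (ii): b ≥ 1, main term with μs^(t+tm) dominates
      have f1 : (1 + μu ^ 2 * a ^ 2 / (1 + μs ^ 2 * b ^ 2)) ^ (t / 2) ≤ 2 ^ (t / 2) :=
        Real.rpow_le_rpow (by positivity) (by linarith) (by positivity)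
      have hbase : μs ^ 2 * (1 + b ^ 2) / 2 ≤ 1 + μs ^ 2 * b ^ 2 := by
        nlinarith [mul_nonneg (sq_nonneg μs) (sub_nonneg.mpr (by nlinarith : (1:ℝ) ≤ b ^ 2))]
      have hbasepos : (0:ℝ) < μs ^ 2 * (1 + b ^ 2) / 2 := by positivity
      have f2 : (1 + μs ^ 2 * b ^ 2) ^ ((t + tm) / 2) ≤
          (μs ^ 2 * (1 + b ^ 2) / 2) ^ ((t + tm) / 2) :=
        Real.rpow_le_rpow_of_nonpos hbasepos hbase htm2
      have hμs0 : (0:ℝ) < μs := by linarith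
      have expand2 : 2 ^ (t / 2) * (μs ^ 2 * (1 + b ^ 2) / 2) ^ ((t + tm) / 2) =
          2 ^ (-tm / 2) * μs ^ (t + tm) *
            ((1 + b ^ 2) ^ (t / 2) * (1 + b ^ 2) ^ (tm / 2)) := by
        have hμt : (μs ^ 2) ^ ((t + tm) / 2) = μs ^ (t + tm) := by
          rw [← Real.rpow_natCast μs 2, ← Real.rpow_mul hμs0.le,
            show ((2:ℕ):ℝ) * ((t + tm) / 2) = t + tm by push_cast; ring]
        have hb2 : (1 + b ^ 2) ^ ((t + tm) / 2) =
            (1 + b ^ 2) ^ (t / 2) * (1 + b ^ 2) ^ (tm / 2) := by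
          rw [← Real.rpow_add hP, show t / 2 + tm / 2 = (t + tm) / 2 by ring]
        have h2e : (2:ℝ) ^ (t / 2) = 2 ^ ((t + tm) / 2) * 2 ^ (-tm / 2) := by
          rw [← Real.rpow_add two_pos, show (t + tm) / 2 + -tm / 2 = t / 2 by ring]
        have hne : ((2:ℝ) ^ ((t + tm) / 2)) ≠ 0 := (Real.rpow_pos_of_pos two_pos _).ne'
        rw [Real.div_rpow (by positivity) (by norm_num),
          Real.mul_rpow (by positivity) (by positivity), hμt, hb2, h2e]
        field_simp
      calc (1 + μu ^ 2 * a ^ 2 / (1 + μs ^ 2 * b ^ 2)) ^ (t / 2) *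
            (1 + μs ^ 2 * b ^ 2) ^ ((t + tm) / 2)
          ≤ 2 ^ (t / 2) * (μs ^ 2 * (1 + b ^ 2) / 2) ^ ((t + tm) / 2) :=
            mul_le_mul f1 f2 (Real.rpow_nonneg (by positivity) _) (by positivity)
        _ = 2 ^ (-tm / 2) * μs ^ (t + tm) *
              ((1 + b ^ 2) ^ (t / 2) * (1 + b ^ 2) ^ (tm / 2)) := expand2
        _ ≤ (2:ℝ) ^ (max t (-tm / 2)) * max (μu ^ t) (μs ^ (t + tm)) *
              ((1 + a ^ 2 + b ^ 2) ^ (t / 2) * (1 + b ^ 2) ^ (tm / 2)) := by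
            have hb2 : (1 + b ^ 2) ^ (t / 2) ≤ (1 + a ^ 2 + b ^ 2) ^ (t / 2) :=
              Real.rpow_le_rpow hP.le (by nlinarith [sq_nonneg a]) (by positivity)
            have h1 : (2:ℝ) ^ (-tm / 2) ≤ (2:ℝ) ^ (max t (-tm / 2)) :=
              Real.rpow_le_rpow_of_exponent_le one_le_two (le_max_right _ _)
            have h2 : μs ^ (t + tm) ≤ max (μu ^ t) (μs ^ (t + tm)) := le_max_right _ _
            have hpos1 : (0:ℝ) < (2:ℝ) ^ (-tm / 2) := Real.rpow_pos_of_pos two_pos _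
            have hpos2 : (0:ℝ) < μs ^ (t + tm) := Real.rpow_pos_of_pos hμs0 _
            have hpos3 : (0:ℝ) < (1 + b ^ 2) ^ (tm / 2) := Real.rpow_pos_of_pos hP _
            have := mul_le_mul (mul_le_mul h1 h2 hpos2.le h2max.le)
              (mul_le_mul_of_nonneg_right hb2 hpos3.le)
              (by positivity) (by positivity)
            exact this
        _ ≤ _ := le_add_of_nonneg_right (by positivity)
    · -- case (iii): compact region, constant C dominates
      have hfr3 : 1 + μu ^ 2 * a ^ 2 / (1 + μs ^ 2 * b ^ 2) ≤ 3 := by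
        have : μu ^ 2 * a ^ 2 / (1 + μs ^ 2 * b ^ 2) ≤ μu ^ 2 * a ^ 2 :=
          div_le_self (by positivity) (by nlinarith)
        nlinarith [sq_nonneg b]
      have f1 : (1 + μu ^ 2 * a ^ 2 / (1 + μs ^ 2 * b ^ 2)) ^ (t / 2) ≤ 3 ^ (t / 2) :=
        Real.rpow_le_rpow (by positivity) hfr3 (by positivity)
      have f2 : (1 + μs ^ 2 * b ^ 2) ^ ((t + tm) / 2) ≤ 1 :=
        Real.rpow_le_one_of_one_le_of_nonpos (by nlinarith) htm2
      have f3 : (2:ℝ) ^ (tm / 2) ≤ (1 + b ^ 2) ^ (tm / 2) :=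
        Real.rpow_le_rpow_of_nonpos hP (by nlinarith) (by linarith)
      have key : (1 + μu ^ 2 * a ^ 2 / (1 + μs ^ 2 * b ^ 2)) ^ (t / 2) *
          (1 + μs ^ 2 * b ^ 2) ^ ((t + tm) / 2) ≤ 3 ^ (t / 2) := by
        calc _ ≤ (3:ℝ) ^ (t / 2) * 1 :=
              mul_le_mul f1 f2 (Real.rpow_nonneg (by positivity) _) (by positivity)
          _ = 3 ^ (t / 2) := mul_one _
      have hC : (3:ℝ) ^ (t / 2) ≤ (3 ^ (t / 2) * 2 ^ (-tm / 2)) * (1 + b ^ 2) ^ (tm / 2) := by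
        have h22 : (2:ℝ) ^ (-tm / 2) * (2:ℝ) ^ (tm / 2) = 1 := by
          rw [← Real.rpow_add two_pos, show -tm / 2 + tm / 2 = 0 by ring, Real.rpow_zero]
        have h3pos : (0:ℝ) < (3:ℝ) ^ (t / 2) := Real.rpow_pos_of_pos (by norm_num) _
        have h2neg : (0:ℝ) < (2:ℝ) ^ (-tm / 2) := Real.rpow_pos_of_pos two_pos _
        nlinarith [mul_le_mul_of_nonneg_left f3 (mul_nonneg h3pos.le h2neg.le)]
      have hmain0 : 0 ≤ (2:ℝ) ^ (max t (-tm / 2)) * max (μu ^ t) (μs ^ (t + tm)) *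
          ((1 + a ^ 2 + b ^ 2) ^ (t / 2) * (1 + b ^ 2) ^ (tm / 2)) := by
        exact mul_nonneg (mul_nonneg h2max.le hmaxpos.le) hmainnn
      linarith

theorem stmt_4 (du ds : ℕ) (t tm μu μs : ℝ)
    (ht : 0 < t) (htm : tm < 0) (hsum : t + tm < 0)
    (hμu : μu ≤ 1) (hμs : 1 ≤ μs)
    (U : EuclideanSpace ℝ (Fin du) →ₗ[ℝ] EuclideanSpace ℝ (Fin du))
    (S : EuclideanSpace ℝ (Fin ds) →ₗ[ℝ] EuclideanSpace ℝ (Fin ds))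
    (hU : ∀ ξ, ‖U ξ‖ ≤ μu * ‖ξ‖) (hS : ∀ η, μs * ‖η‖ ≤ ‖S η‖) :
    ∃ C > 0, ∀ (ξ : EuclideanSpace ℝ (Fin du)) (η : EuclideanSpace ℝ (Fin ds)),
      (1 + ‖U ξ‖ ^ 2 + ‖S η‖ ^ 2) ^ (t / 2) * (1 + ‖S η‖ ^ 2) ^ (tm / 2) ≤
        (2 : ℝ) ^ (max t (-tm / 2)) * max (μu ^ t) (μs ^ (t + tm)) *
          ((1 + ‖ξ‖ ^ 2 + ‖η‖ ^ 2) ^ (t / 2) * (1 + ‖η‖ ^ 2) ^ (tm / 2)) +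
        C * (1 + ‖η‖ ^ 2) ^ (tm / 2) := by
  refine ⟨3 ^ (t / 2) * 2 ^ (-tm / 2), by positivity, fun ξ η => ?_⟩
  apply key_ineq t tm μu μs ‖ξ‖ ‖η‖ ‖U ξ‖ ‖S η‖ ht htm hsum hμu hμs (norm_nonneg _)
  · have h := hU ξ
    have h2 := pow_le_pow_left₀ (norm_nonneg _) h 2
    calc ‖U ξ‖ ^ 2 ≤ (μu * ‖ξ‖) ^ 2 := h2
      _ = μu ^ 2 * ‖ξ‖ ^ 2 := by ring
  · have h := hS η
    have h2 := pow_le_pow_left₀ (by positivity) h 2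
    calc μs ^ 2 * ‖η‖ ^ 2 = (μs * ‖η‖) ^ 2 := by ring
      _ ≤ ‖S η‖ ^ 2 := h2
  · intro hc
    by_contra hneg
    push_neg at hneg
    have hξ : 0 < ‖ξ‖ := by
      rcases eq_or_lt_of_le (norm_nonneg ξ) with h0 | h0
      · exfalso
        rw [← h0] at hc
        nlinarith [sq_nonneg ‖η‖]
      · exact h0
    nlinarith [norm_nonneg (U ξ), hU ξ]
end

section
/- Let T: X → X be a measurable map on a measurable space, let μ be a finite complex measure and λ a complex number with |λ| = 1 such that the pushforward T_*(φ μ) = λ φ μ, where μ is a T-invariant probability measure and φ ∈ L^∞(μ). Then ∫ |φ ∘ T − λ^{-1} φ|² dμ = 0, i.e., φ ∘ T = λ^{-1} φ μ-almost everywhere. -/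
open MeasureTheory Complex

lemma bdd_integrable {X : Type*} [MeasurableSpace X] (μ : Measure X)
    [IsProbabilityMeasure μ] {f : X → ℝ} (hf : AEStronglyMeasurable f μ)
    {M : ℝ} (h : ∀ x, ‖f x‖ ≤ M) : Integrable f μ :=
  (integrable_const M).mono' hf (Filter.Eventually.of_forall h)

theorem stmt_10 {X : Type*} [MeasurableSpace X] (T : X → X) (hT : Measurable T)
    (μ : Measure X) [IsProbabilityMeasure μ] (hμ : MeasurePreserving T μ μ)
    (φ : X → ℂ) (hφm : Measurable φ) (hφb : ∃ M, ∀ x, ‖φ x‖ ≤ M)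
    (lam : ℂ) (hlam : ‖lam‖ = 1)
    (hpush : ∀ g : X → ℂ, Measurable g → (∃ M, ∀ x, ‖g x‖ ≤ M) →
      ∫ x, g (T x) * φ x ∂μ = lam * ∫ x, g x * φ x ∂μ) :
    (∫ x, ‖φ (T x) - lam⁻¹ * φ x‖ ^ 2 ∂μ = 0) ∧
      (∀ᵐ x ∂μ, φ (T x) = lam⁻¹ * φ x) := by
  obtain ⟨M, hM⟩ := hφb
  have hlam0 : lam ≠ 0 := by
    intro h; rw [h, norm_zero] at hlam; norm_num at hlam
  -- S = ∫ ‖φ‖²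
  set S : ℝ := ∫ x, ‖φ x‖ ^ 2 ∂μ with hS
  have hmeasn : Measurable fun x => ‖φ x‖ ^ 2 := (hφm.norm.pow_const 2)
  -- step A: ∫ ‖φ (T x)‖² = S
  have stepA : ∫ x, ‖φ (T x)‖ ^ 2 ∂μ = S := by
    have := MeasureTheory.integral_map (μ := μ) hT.aemeasurable
      (f := fun x => ‖φ x‖ ^ 2) hmeasn.aestronglyMeasurable
    rw [hμ.map_eq] at this
    exact this.symm
  -- step B: ∫ conj(φ(Tx)) * φ x = lam * ∫ conj φ * φ
  have hconjm : Measurable fun x => (starRingEnd ℂ) (φ x) :=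
    Complex.continuous_conj.measurable.comp hφm
  have stepB := hpush (fun x => (starRingEnd ℂ) (φ x)) hconjm
    ⟨M, fun x => by simpa using hM x⟩
  have hconjmul : ∀ z : ℂ, (starRingEnd ℂ) z * z = (‖z‖ ^ 2 : ℝ) := by
    intro z
    rw [mul_comm, Complex.mul_conj]
    norm_cast
    rw [Complex.normSq_eq_norm_sq]
  have hSc : ∫ x, (starRingEnd ℂ) (φ x) * φ x ∂μ = (S : ℂ) := by
    have : ∀ x, (starRingEnd ℂ) (φ x) * φ x = ((‖φ x‖ ^ 2 : ℝ) : ℂ) := fun x =>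
      hconjmul (φ x)
    rw [show (fun x => (starRingEnd ℂ) (φ x) * φ x) = fun x => ((‖φ x‖ ^ 2 : ℝ) : ℂ) from
      funext this]
    exact integral_ofReal
  -- integrability facts
  have hb2 : ∀ x, ‖‖φ x‖ ^ 2‖ ≤ M ^ 2 := by
    intro x
    have h0 : (0:ℝ) ≤ ‖φ x‖ := norm_nonneg _
    rw [Real.norm_eq_abs, _root_.abs_of_nonneg (by positivity)]
    exact pow_le_pow_left₀ h0 (hM x) 2
  have int1 : Integrable (fun x => ‖φ (T x)‖ ^ 2) μ :=
    bdd_integrable μ ((hmeasn.comp hT).aestronglyMeasurable) (fun x => hb2 (T x))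
  have int2 : Integrable (fun x => ‖φ x‖ ^ 2) μ :=
    bdd_integrable μ hmeasn.aestronglyMeasurable hb2
  have hcrossm : Measurable fun x => (starRingEnd ℂ) (φ (T x)) * (lam⁻¹ * φ x) :=
    (hconjm.comp hT).mul (measurable_const.mul hφm)
  have hcrossint : Integrable (fun x => ((starRingEnd ℂ) (φ (T x)) * (lam⁻¹ * φ x)).re) μ := by
    refine bdd_integrable μ (Complex.measurable_re.comp hcrossm).aestronglyMeasurable
      (M := M * (1 * M)) (fun x => ?_)
    calc ‖((starRingEnd ℂ) (φ (T x)) * (lam⁻¹ * φ x)).re‖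
        ≤ ‖(starRingEnd ℂ) (φ (T x)) * (lam⁻¹ * φ x)‖ := Complex.abs_re_le_norm _
      _ = ‖φ (T x)‖ * (‖lam⁻¹‖ * ‖φ x‖) := by simp [norm_mul]
      _ ≤ M * (1 * M) := by
          have h1 : ‖lam⁻¹‖ = 1 := by rw [norm_inv, hlam]; norm_num
          rw [h1]
          have := hM (T x); have := hM x
          have h0 : (0:ℝ) ≤ ‖φ (T x)‖ := norm_nonneg _
          nlinarith [norm_nonneg (φ x), hM x, hM (T x)]
  -- cross term value
  have stepC : ∫ x, ((starRingEnd ℂ) (φ (T x)) * (lam⁻¹ * φ x)).re ∂μ = S := by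
    have hint : Integrable (fun x => (starRingEnd ℂ) (φ (T x)) * (lam⁻¹ * φ x)) μ := by
      refine Integrable.mono' (g := fun _ => M * (1 * M)) (integrable_const _)
        hcrossm.aestronglyMeasurable (Filter.Eventually.of_forall fun x => ?_)
      have h1 : ‖lam⁻¹‖ = 1 := by rw [norm_inv, hlam]; norm_num
      rw [norm_mul, norm_mul, h1]
      simp only [RingHomIsometric.norm_map]
      nlinarith [norm_nonneg (φ x), norm_nonneg (φ (T x)), hM x, hM (T x)]
    have hre := integral_re (𝕜 := ℂ) hint
    simp only [RCLike.re_eq_complex_re] at hre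
    rw [hre]
    have : ∫ x, (starRingEnd ℂ) (φ (T x)) * (lam⁻¹ * φ x) ∂μ = (S : ℂ) := by
      have hrw : (fun x => (starRingEnd ℂ) (φ (T x)) * (lam⁻¹ * φ x)) =
          fun x => lam⁻¹ * ((starRingEnd ℂ) (φ (T x)) * φ x) := by
        funext x; ring
      rw [hrw, integral_const_mul, stepB, hSc, ← mul_assoc, inv_mul_cancel₀ hlam0, one_mul]
    rw [this, Complex.ofReal_re]
  -- pointwise expansion
  have hpt : ∀ x, ‖φ (T x) - lam⁻¹ * φ x‖ ^ 2 =
      ‖φ (T x)‖ ^ 2 - 2 * ((starRingEnd ℂ) (φ (T x)) * (lam⁻¹ * φ x)).re + ‖φ x‖ ^ 2 := by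
    intro x
    have key : ∀ z w : ℂ, ‖z - w‖ ^ 2 = ‖z‖ ^ 2 - 2 * ((starRingEnd ℂ) z * w).re + ‖w‖ ^ 2 := by
      intro z w
      simp only [Complex.sq_norm, Complex.normSq_apply, Complex.sub_re,
        Complex.sub_im, Complex.mul_re, Complex.mul_im, Complex.conj_re, Complex.conj_im]
      ring
    have h1 : ‖lam⁻¹ * φ x‖ ^ 2 = ‖φ x‖ ^ 2 := by
      rw [norm_mul, norm_inv, hlam]; ring
    rw [key, h1]
  have hmain : ∫ x, ‖φ (T x) - lam⁻¹ * φ x‖ ^ 2 ∂μ = 0 := by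
    calc ∫ x, ‖φ (T x) - lam⁻¹ * φ x‖ ^ 2 ∂μ
        = ∫ x, (‖φ (T x)‖ ^ 2 - 2 * ((starRingEnd ℂ) (φ (T x)) * (lam⁻¹ * φ x)).re
            + ‖φ x‖ ^ 2) ∂μ := by
          exact integral_congr_ae (Filter.Eventually.of_forall hpt)
      _ = (∫ x, (‖φ (T x)‖ ^ 2 - 2 * ((starRingEnd ℂ) (φ (T x)) * (lam⁻¹ * φ x)).re) ∂μ)
            + ∫ x, ‖φ x‖ ^ 2 ∂μ := integral_add (Integrable.sub int1 (hcrossint.const_mul 2)) int2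
      _ = (∫ x, ‖φ (T x)‖ ^ 2 ∂μ)
            - (∫ x, 2 * ((starRingEnd ℂ) (φ (T x)) * (lam⁻¹ * φ x)).re ∂μ) + S :=
          by rw [integral_sub int1 (hcrossint.const_mul 2)]
      _ = S - 2 * S + S := by rw [stepA, integral_const_mul, stepC]
      _ = 0 := by ring
  refine ⟨hmain, ?_⟩
  have hintsq : Integrable (fun x => ‖φ (T x) - lam⁻¹ * φ x‖ ^ 2) μ := by
    refine bdd_integrable μ ?_ (M := (M + 1 * M) ^ 2) (fun x => ?_)
    · exact (((hφm.comp hT).sub (measurable_const.mul hφm)).norm.pow_const 2).aestronglyMeasurable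
    · have h1 : ‖lam⁻¹‖ = 1 := by rw [norm_inv, hlam]; norm_num
      have h2 : ‖φ (T x) - lam⁻¹ * φ x‖ ≤ M + 1 * M := by
        calc ‖φ (T x) - lam⁻¹ * φ x‖ ≤ ‖φ (T x)‖ + ‖lam⁻¹ * φ x‖ := norm_sub_le _ _
          _ ≤ M + 1 * M := by rw [norm_mul, h1]; exact add_le_add (hM (T x)) (by linarith [hM x])
      rw [Real.norm_eq_abs, _root_.abs_of_nonneg (by positivity)]
      exact pow_le_pow_left₀ (norm_nonneg _) h2 2
  have hzero : (fun x => ‖φ (T x) - lam⁻¹ * φ x‖ ^ 2) =ᵐ[μ] 0 := by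
    rw [← integral_eq_zero_iff_of_nonneg (fun x => by positivity) hintsq]
    exact hmain
  filter_upwards [hzero] with x hx
  have : ‖φ (T x) - lam⁻¹ * φ x‖ = 0 := by
    have := hx
    simp only [Pi.zero_apply] at this
    nlinarith [norm_nonneg (φ (T x) - lam⁻¹ * φ x)]
  rw [norm_eq_zero, sub_eq_zero] at this
  exact this
end

section
/- Let f: X → ℝ be bounded and T: X → X a map; write S_n f = Σ_{j=0}^{n-1} f∘T^j. Assume there exist constants a ∈ ℝ, C > 0 and δ ∈ (0,1) and a finite measure ν such that for all i, j ≥ 0: |∫ (f∘T^i)(f∘T^{i+j}) dν − a| ≤ C(δ^i + δ^j). Then there is C' > 0 such that for all n, m ≥ 1: |∫ (S_n f/n)(S_m f/m) dν − a| ≤ C'(1/n + 1/m); consequently ∫ |S_n f/n − S_m f/m|² dν ≤ 3C'(1/n + 1/m). -/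
open MeasureTheory Finset
set_option linter.unusedSectionVars false

private lemma geom_aux {δ : ℝ} (h0 : 0 ≤ δ) (h1 : δ < 1) (s : Finset ℕ) :
    ∑ k ∈ s, δ ^ k ≤ (1 - δ)⁻¹ := by
  have hs : Summable (fun k : ℕ => δ ^ k) := summable_geometric_of_lt_one h0 h1
  calc ∑ k ∈ s, δ ^ k ≤ ∑' k, δ ^ k := Summable.sum_le_tsum s (fun k _ => pow_nonneg h0 k) hs
    _ = (1 - δ)⁻¹ := tsum_geometric_of_lt_one h0 h1

private lemma row_aux {δ : ℝ} (h0 : 0 ≤ δ) (h1 : δ < 1) (i m : ℕ) :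
    ∑ j ∈ range m, δ ^ (max i j - min i j) ≤ 2 * (1 - δ)⁻¹ := by
  classical
  rw [← Finset.sum_filter_add_sum_filter_not (range m) (· ≤ i)]
  have b1 : ∑ j ∈ (range m).filter (· ≤ i), δ ^ (max i j - min i j) ≤ (1 - δ)⁻¹ := by
    have e1 : ∑ j ∈ (range m).filter (· ≤ i), δ ^ (max i j - min i j)
        = ∑ j ∈ (range m).filter (· ≤ i), δ ^ (i - j) := by
      refine Finset.sum_congr rfl fun j hj => ?_
      simp only [Finset.mem_filter] at hj
      congr 1
      omega
    have e2 : ∑ j ∈ (range m).filter (· ≤ i), δ ^ (i - j)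
        = ∑ k ∈ ((range m).filter (· ≤ i)).image (fun j => i - j), δ ^ k := by
      refine (Finset.sum_image ?_).symm
      intro x hx y hy hxy
      simp only [Finset.mem_coe, Finset.mem_filter] at hx hy
      omega
    rw [e1, e2]; exact geom_aux h0 h1 _
  have b2 : ∑ j ∈ (range m).filter (fun j => ¬ j ≤ i), δ ^ (max i j - min i j) ≤ (1 - δ)⁻¹ := by
    have e1 : ∑ j ∈ (range m).filter (fun j => ¬ j ≤ i), δ ^ (max i j - min i j)
        = ∑ j ∈ (range m).filter (fun j => ¬ j ≤ i), δ ^ (j - i) := by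
      refine Finset.sum_congr rfl fun j hj => ?_
      simp only [Finset.mem_filter] at hj
      congr 1
      omega
    have e2 : ∑ j ∈ (range m).filter (fun j => ¬ j ≤ i), δ ^ (j - i)
        = ∑ k ∈ ((range m).filter (fun j => ¬ j ≤ i)).image (fun j => j - i), δ ^ k := by
      refine (Finset.sum_image ?_).symm
      intro x hx y hy hxy
      simp only [Finset.mem_coe, Finset.mem_filter] at hx hy hxy
      omega
    rw [e1, e2]; exact geom_aux h0 h1 _
  linarith


private lemma int_aux {X : Type*} [MeasurableSpace X] (ν : Measure X) [IsFiniteMeasure ν]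
    (T : X → X) (hT : Measurable T)
    (f : X → ℝ) (hfm : Measurable f) (hfb : ∃ M, ∀ x, |f x| ≤ M) (i j : ℕ) :
    Integrable (fun x => f (T^[i] x) * f (T^[j] x)) ν := by
  obtain ⟨M, hM⟩ := hfb
  refine ⟨((hfm.comp (hT.iterate i)).mul (hfm.comp (hT.iterate j))).aestronglyMeasurable, ?_⟩
  refine HasFiniteIntegral.of_bounded (C := M * M) (ae_of_all _ fun x => ?_)
  have h1 := hM (T^[i] x); have h2 := hM (T^[j] x)
  have := abs_nonneg (f (T^[i] x))
  calc ‖f (T^[i] x) * f (T^[j] x)‖ = |f (T^[i] x)| * |f (T^[j] x)| := abs_mul _ _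
    _ ≤ M * M := mul_le_mul h1 h2 (abs_nonneg _) (le_trans this h1)

private lemma pt_aux {X : Type*} (T : X → X) (f : X → ℝ) (n m : ℕ) (x : X) :
    ((∑ j ∈ range n, f (T^[j] x)) / n) * ((∑ j ∈ range m, f (T^[j] x)) / m)
      = (∑ p ∈ range n ×ˢ range m, f (T^[p.1] x) * f (T^[p.2] x)) / ((n : ℝ) * m) := by
  rw [div_mul_div_comm, Finset.sum_mul_sum, Finset.sum_product]

private lemma intA_aux {X : Type*} [MeasurableSpace X] (ν : Measure X) [IsFiniteMeasure ν]
    (T : X → X) (hT : Measurable T)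
    (f : X → ℝ) (hfm : Measurable f) (hfb : ∃ M, ∀ x, |f x| ≤ M) (n m : ℕ) :
    Integrable (fun x => ((∑ j ∈ range n, f (T^[j] x)) / (n : ℝ)) *
      ((∑ j ∈ range m, f (T^[j] x)) / (m : ℝ))) ν := by
  have : (fun x => ((∑ j ∈ range n, f (T^[j] x)) / (n : ℝ)) *
      ((∑ j ∈ range m, f (T^[j] x)) / (m : ℝ)))
      = fun x => (∑ p ∈ range n ×ˢ range m, f (T^[p.1] x) * f (T^[p.2] x)) / ((n : ℝ) * m) :=
    funext (pt_aux T f n m)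
  rw [this]
  exact (integrable_finset_sum _ (fun p _ => int_aux ν T hT f hfm hfb p.1 p.2)).div_const _

private lemma core_aux {X : Type*} [MeasurableSpace X] (ν : Measure X) [IsFiniteMeasure ν]
    (T : X → X) (hT : Measurable T)
    (f : X → ℝ) (hfm : Measurable f) (hfb : ∃ M, ∀ x, |f x| ≤ M)
    (a C δ : ℝ) (hC : 0 < C) (hδ0 : 0 < δ) (hδ1 : δ < 1)
    (hcorr : ∀ i j : ℕ,
      |∫ x, f (T^[i] x) * f (T^[i + j] x) ∂ν - a| ≤ C * (δ ^ i + δ ^ j))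
    (n m : ℕ) (hn : 1 ≤ n) (hm : 1 ≤ m) :
    |∫ x, ((∑ j ∈ range n, f (T^[j] x)) / n) *
          ((∑ j ∈ range m, f (T^[j] x)) / m) ∂ν - a|
      ≤ (3 * C * (1 - δ)⁻¹) * (1 / n + 1 / m) := by
  set K : ℝ := (1 - δ)⁻¹ with hKdef
  have hK : 0 < K := by
    rw [hKdef]
    have : (0:ℝ) < 1 - δ := by linarith
    exact inv_pos.mpr this
  have hn' : (1 : ℝ) ≤ (n : ℝ) := by exact_mod_cast hn
  have hm' : (1 : ℝ) ≤ (m : ℝ) := by exact_mod_cast hm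
  have hn0 : (0 : ℝ) < n := by linarith
  have hm0 : (0 : ℝ) < m := by linarith
  -- generalized correlation bound
  have hcorr2 : ∀ i j : ℕ, |(∫ x, f (T^[i] x) * f (T^[j] x) ∂ν) - a|
      ≤ C * (δ ^ min i j + δ ^ (max i j - min i j)) := by
    intro i j
    rcases le_total i j with h | h
    · have := hcorr i (j - i)
      rw [show i + (j - i) = j by omega] at this
      rw [min_eq_left h, show max i j - i = j - i by omega]
      exact this
    · have := hcorr j (i - j)
      rw [show j + (i - j) = i by omega] at this
      have hcm : (∫ x, f (T^[j] x) * f (T^[i] x) ∂ν) = ∫ x, f (T^[i] x) * f (T^[j] x) ∂ν := by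
        congr 1; funext x; ring
      rw [hcm] at this
      rw [min_eq_right h, show max i j - j = i - j by omega]
      exact this
  -- compute the integral as a double sum
  have hSP : (∫ x, ((∑ j ∈ range n, f (T^[j] x)) / n) *
          ((∑ j ∈ range m, f (T^[j] x)) / m) ∂ν)
      = (∑ p ∈ range n ×ˢ range m, ∫ x, f (T^[p.1] x) * f (T^[p.2] x) ∂ν) / ((n : ℝ) * m) := by
    simp only [pt_aux T f n m]
    rw [integral_div, integral_finset_sum _ (fun p _ => int_aux ν T hT f hfm hfb p.1 p.2)]
  rw [hSP]
  have hnm : (0 : ℝ) < (n : ℝ) * m := by positivity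
  have ha : a = (∑ _p ∈ range n ×ˢ range m, a) / ((n : ℝ) * m) := by
    rw [Finset.sum_const, Finset.card_product, Finset.card_range, Finset.card_range,
      nsmul_eq_mul]
    push_cast
    field_simp
  rw [ha, div_sub_div_same, ← Finset.sum_sub_distrib, abs_div, abs_of_pos hnm]
  have hsum : |∑ p ∈ range n ×ˢ range m,
        ((∫ x, f (T^[p.1] x) * f (T^[p.2] x) ∂ν) - a)|
      ≤ C * ((m : ℝ) * K + n * K) + C * ((n : ℝ) * (2 * K)) := by
    calc |∑ p ∈ range n ×ˢ range m, ((∫ x, f (T^[p.1] x) * f (T^[p.2] x) ∂ν) - a)|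
        ≤ ∑ p ∈ range n ×ˢ range m, |(∫ x, f (T^[p.1] x) * f (T^[p.2] x) ∂ν) - a| :=
          Finset.abs_sum_le_sum_abs _ _
      _ ≤ ∑ p ∈ range n ×ˢ range m,
            C * (δ ^ min p.1 p.2 + δ ^ (max p.1 p.2 - min p.1 p.2)) :=
          Finset.sum_le_sum fun p _ => hcorr2 p.1 p.2
      _ = C * (∑ p ∈ range n ×ˢ range m, δ ^ min p.1 p.2)
          + C * (∑ p ∈ range n ×ˢ range m, δ ^ (max p.1 p.2 - min p.1 p.2)) := by
          simp only [mul_add, Finset.sum_add_distrib, ← Finset.mul_sum]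
      _ ≤ C * ((m : ℝ) * K + n * K) + C * ((n : ℝ) * (2 * K)) := by
          have hb1 : (∑ p ∈ range n ×ˢ range m, δ ^ min p.1 p.2)
              ≤ (m : ℝ) * K + n * K := by
            rw [Finset.sum_product]
            calc ∑ i ∈ range n, ∑ j ∈ range m, δ ^ min i j
                ≤ ∑ i ∈ range n, ∑ j ∈ range m, (δ ^ i + δ ^ j) := by
                  refine Finset.sum_le_sum fun i _ => Finset.sum_le_sum fun j _ => ?_
                  rcases le_total i j with h | h
                  · rw [min_eq_left h]
                    exact le_add_of_nonneg_right (pow_nonneg hδ0.le j)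
                  · rw [min_eq_right h]
                    exact le_add_of_nonneg_left (pow_nonneg hδ0.le i)
              _ = (m : ℝ) * ∑ i ∈ range n, δ ^ i + (n : ℝ) * ∑ j ∈ range m, δ ^ j := by
                  simp only [Finset.sum_add_distrib, Finset.sum_const, Finset.card_range,
                    nsmul_eq_mul, ← Finset.mul_sum, ← Finset.sum_mul]
              _ ≤ (m : ℝ) * K + n * K := by
                  have g1 := geom_aux hδ0.le hδ1 (range n)
                  have g2 := geom_aux hδ0.le hδ1 (range m)
                  have : (0:ℝ) ≤ (m:ℝ) := hm0.le
                  nlinarith [hn0.le]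
          have hb2 : (∑ p ∈ range n ×ˢ range m, δ ^ (max p.1 p.2 - min p.1 p.2))
              ≤ (n : ℝ) * (2 * K) := by
            rw [Finset.sum_product]
            calc ∑ i ∈ range n, ∑ j ∈ range m, δ ^ (max i j - min i j)
                ≤ ∑ _i ∈ range n, 2 * K :=
                  Finset.sum_le_sum fun i _ => row_aux hδ0.le hδ1 i m
              _ = (n : ℝ) * (2 * K) := by
                  rw [Finset.sum_const, Finset.card_range, nsmul_eq_mul]
          have h1 := mul_le_mul_of_nonneg_left hb1 hC.le
          have h2 := mul_le_mul_of_nonneg_left hb2 hC.le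
          linarith
  calc |∑ p ∈ range n ×ˢ range m, ((∫ x, f (T^[p.1] x) * f (T^[p.2] x) ∂ν) - a)| / ((n:ℝ) * m)
      ≤ (C * ((m : ℝ) * K + n * K) + C * ((n : ℝ) * (2 * K))) / ((n:ℝ) * m) :=
        by gcongr
    _ ≤ (3 * C * K) * (1 / n + 1 / m) := by
        rw [div_le_iff₀ hnm]
        have : (3 * C * K) * (1 / (n:ℝ) + 1 / m) * ((n:ℝ) * m) = 3 * C * K * (m + n) := by
          field_simp
        rw [this]
        nlinarith [mul_nonneg (mul_nonneg hC.le hK.le) hm0.le,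
          mul_nonneg (mul_nonneg hC.le hK.le) hn0.le]


theorem stmt_13 {X : Type*} [MeasurableSpace X] (ν : Measure X) [IsFiniteMeasure ν]
    (T : X → X) (hT : Measurable T)
    (f : X → ℝ) (hfm : Measurable f) (hfb : ∃ M, ∀ x, |f x| ≤ M)
    (a C δ : ℝ) (hC : 0 < C) (hδ0 : 0 < δ) (hδ1 : δ < 1)
    (hcorr : ∀ i j : ℕ,
      |∫ x, f (T^[i] x) * f (T^[i + j] x) ∂ν - a| ≤ C * (δ ^ i + δ ^ j)) :
    ∃ C' > 0, ∀ n m : ℕ, 1 ≤ n → 1 ≤ m →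
      |∫ x, ((∑ j ∈ range n, f (T^[j] x)) / n) *
            ((∑ j ∈ range m, f (T^[j] x)) / m) ∂ν - a| ≤ C' * (1 / n + 1 / m) ∧
      ∫ x, |(∑ j ∈ range n, f (T^[j] x)) / n -
            (∑ j ∈ range m, f (T^[j] x)) / m| ^ 2 ∂ν ≤ 3 * C' * (1 / n + 1 / m) := by
  have hKpos : (0:ℝ) < (1 - δ)⁻¹ := inv_pos.mpr (by linarith)
  refine ⟨6 * C * (1 - δ)⁻¹, by positivity, fun n m hn hm => ?_⟩
  have hn0 : (0:ℝ) < n := by exact_mod_cast hn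
  have hm0 : (0:ℝ) < m := by exact_mod_cast hm
  have hnm0 : (0:ℝ) ≤ 1 / (n:ℝ) + 1 / m := by positivity
  have hcore := core_aux ν T hT f hfm hfb a C δ hC hδ0 hδ1 hcorr
  constructor
  · calc |∫ x, ((∑ j ∈ range n, f (T^[j] x)) / n) *
            ((∑ j ∈ range m, f (T^[j] x)) / m) ∂ν - a|
        ≤ (3 * C * (1 - δ)⁻¹) * (1 / n + 1 / m) := hcore n m hn hm
      _ ≤ (6 * C * (1 - δ)⁻¹) * (1 / n + 1 / m) := by
          apply mul_le_mul_of_nonneg_right _ hnm0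
          nlinarith [mul_pos hC hKpos]
  · have hAA := hcore n n hn hn
    have hAB := hcore n m hn hm
    have hBB := hcore m m hm hm
    have hint1 := intA_aux ν T hT f hfm hfb n n
    have hint2 := intA_aux ν T hT f hfm hfb n m
    have hint3 := intA_aux ν T hT f hfm hfb m m
    have hfun : (fun x => |(∑ j ∈ range n, f (T^[j] x)) / (n:ℝ) -
            (∑ j ∈ range m, f (T^[j] x)) / m| ^ 2)
        = fun x => (((∑ j ∈ range n, f (T^[j] x)) / (n:ℝ)) *
              ((∑ j ∈ range n, f (T^[j] x)) / (n:ℝ))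
            - 2 * (((∑ j ∈ range n, f (T^[j] x)) / (n:ℝ)) *
              ((∑ j ∈ range m, f (T^[j] x)) / (m:ℝ))))
            + ((∑ j ∈ range m, f (T^[j] x)) / (m:ℝ)) *
              ((∑ j ∈ range m, f (T^[j] x)) / (m:ℝ)) := by
      funext x
      rw [sq_abs]
      ring
    have hsub : Integrable (fun x => ((∑ j ∈ range n, f (T^[j] x)) / (n:ℝ)) *
              ((∑ j ∈ range n, f (T^[j] x)) / (n:ℝ))
            - 2 * (((∑ j ∈ range n, f (T^[j] x)) / (n:ℝ)) *
              ((∑ j ∈ range m, f (T^[j] x)) / (m:ℝ)))) ν := hint1.sub (hint2.const_mul 2)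
    rw [hfun, integral_add hsub hint3,
      integral_sub hint1 (hint2.const_mul 2), integral_const_mul 2 _]
    have a1 := abs_le.mp hAA
    have a2 := abs_le.mp hAB
    have a3 := abs_le.mp hBB
    have hpos : 0 ≤ (3 * C * (1 - δ)⁻¹) * (1 / (n:ℝ) + 1 / m) := by positivity
    nlinarith [a1.2, a2.1, a3.2, hpos]
end
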